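/- Let $S$ be a numerical semigroup with multiplicity $m$, genus $g$, and Kunz coordinate vector $(k_1,\dots,k_{m-1})$. If $k_i = 3$ for some $i \in [1,m-1]$, then $g \geq m + 1 + \lceil (i-1)/2 \rceil$. -/

import Mathlib

theorem stmt_16 (S : Set ℕ) (h0 : 0 ∈ S) (hadd : ∀ a ∈ S, ∀ b ∈ S, a + b ∈ S)
    (hfin : Sᶜ.Finite) (m g : ℕ) (hm2 : 2 ≤ m)
    (hm : sInf (S \ {0}) = m) (hg : Sᶜ.ncard = g)
    (x : ℕ → ℕ)
    (hx : ∀ i, 1 ≤ i → i ≤ m - 1 → x i * m + i ∈ S ∧ (x i - 1) * m + i ∉ S)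
    (i : ℕ) (hi1 : 1 ≤ i) (hi2 : i ≤ m - 1) (hxi : x i = 3) :
    (m : ℤ) + 1 + ⌈((i : ℚ) - 1) / 2⌉ ≤ (g : ℤ) := by
  -- m ∈ S
  have hSinf : S.Infinite := by
    have := hfin.infinite_compl
    rwa [compl_compl] at this
  have hSne : (S \ {0}).Nonempty := by
    obtain ⟨b, hb, hb0⟩ := hSinf.exists_gt 0
    exact ⟨b, hb, by simp; omega⟩
  have hmS : m ∈ S := by
    have := Nat.sInf_mem hSne
    rw [hm] at this
    exact this.1
  -- closure under adding multiples of m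
  have hMul : ∀ a ∈ S, ∀ t : ℕ, t * m + a ∈ S := by
    intro a ha t
    induction t with
    | zero => simpa using ha
    | succ t ih =>
      have : m + (t * m + a) ∈ S := hadd m hmS _ ih
      have he : (t + 1) * m + a = m + (t * m + a) := by ring
      rw [he]; exact this
  -- x j ≥ 1
  have hx1 : ∀ j, 1 ≤ j → j ≤ m - 1 → 1 ≤ x j := by
    intro j hj1 hj2
    by_contra h
    have hz : x j = 0 := by omega
    have h1 := (hx j hj1 hj2).1
    have h2 := (hx j hj1 hj2).2
    rw [hz] at h1 h2
    simp at h1 h2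
    exact h2 h1
  -- gaps
  have hgap : ∀ j, 1 ≤ j → j ≤ m - 1 → ∀ l, l < x j → l * m + j ∉ S := by
    intro j hj1 hj2 l hl hmem
    apply (hx j hj1 hj2).2
    have he : (x j - 1) * m + j = (x j - 1 - l) * m + (l * m + j) := by
      have h1 : x j - 1 - l + l = x j - 1 := by omega
      rw [← add_assoc, ← add_mul, h1]
    rw [he]
    exact hMul _ hmem _
  -- superadditivity at i
  have hsup : ∀ j, 1 ≤ j → j < i → 3 ≤ x j + x (i - j) := by
    intro j hj1 hj2
    have hj2' : j ≤ m - 1 := by omega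
    have hij1 : 1 ≤ i - j := by omega
    have hij2 : i - j ≤ m - 1 := by omega
    have h1 := (hx j hj1 hj2').1
    have h2 := (hx (i - j) hij1 hij2).1
    have hmem : (x j + x (i - j)) * m + i ∈ S := by
      have := hadd _ h1 _ h2
      have he : x j * m + j + (x (i - j) * m + (i - j)) = (x j + x (i - j)) * m + i := by
        have : j + (i - j) = i := by omega
        rw [add_mul]
        omega
      rw [he] at this
      exact this
    by_contra h
    apply (hx i hi1 hi2).2
    rw [hxi]
    have he : (3 - 1) * m + i = (2 - (x j + x (i - j))) * m + ((x j + x (i - j)) * m + i) := by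
      have h1 : 2 - (x j + x (i - j)) + (x j + x (i - j)) = 2 := by omega
      rw [← add_assoc, ← add_mul, h1]
    rw [he]
    exact hMul _ hmem _
  -- the finset of gaps
  set F : Finset ℕ := (Finset.Ico 1 m).biUnion
    (fun j => (Finset.range (x j)).image (fun l => l * m + j)) with hF
  have hFsub : (F : Set ℕ) ⊆ Sᶜ := by
    intro n hn
    simp only [hF, Finset.coe_biUnion, Finset.mem_coe, Finset.mem_Ico, Set.mem_iUnion,
      Finset.coe_image, Finset.coe_range, Set.mem_image, Set.mem_Iio] at hn
    obtain ⟨j, ⟨hj1, hj2⟩, l, hl, rfl⟩ := hn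
    exact hgap j hj1 (by omega) l hl
  have hcard : F.card = ∑ j ∈ Finset.Ico 1 m, x j := by
    rw [hF, Finset.card_biUnion]
    · apply Finset.sum_congr rfl
      intro j hj
      rw [Finset.card_image_of_injective, Finset.card_range]
      intro a b hab
      simp only at hab
      have : a * m = b * m := by omega
      exact Nat.eq_of_mul_eq_mul_right (by omega) this
    · intro j1 hj1 j2 hj2 hne
      simp only [Finset.mem_coe, Finset.coe_Ico, Set.mem_Ico, Finset.mem_Ico] at hj1 hj2
      apply Finset.disjoint_left.mpr
      intro n hn1 hn2
      simp only [Finset.mem_image, Finset.mem_range] at hn1 hn2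
      obtain ⟨a, _, ha⟩ := hn1
      obtain ⟨b, _, hb⟩ := hn2
      apply hne
      have h1 : n % m = j1 := by rw [← ha]; simp [Nat.add_mod, Nat.mul_mod_left, Nat.mod_eq_of_lt hj1.2]
      have h2 : n % m = j2 := by rw [← hb]; simp [Nat.add_mod, Nat.mul_mod_left, Nat.mod_eq_of_lt hj2.2]
      omega
  have hgF : ∑ j ∈ Finset.Ico 1 m, x j ≤ g := by
    calc ∑ j ∈ Finset.Ico 1 m, x j = F.card := hcard.symm
    _ = (F : Set ℕ).ncard := (Set.ncard_coe_finset F).symm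
    _ ≤ Sᶜ.ncard := Set.ncard_le_ncard hFsub hfin
    _ = g := hg
  -- sum over the first part
  set S1 := ∑ j ∈ Finset.Ico 1 i, x j with hS1
  have hrev : S1 = ∑ j ∈ Finset.Ico 1 i, x (i - j) := by
    rw [hS1]
    apply Finset.sum_nbij' (fun j => i - j) (fun j => i - j) <;>
      intro a ha <;> simp only [Finset.mem_Ico] at * <;>
      first
        | omega
        | (congr 1; omega)
  have hS1b : 3 * (i - 1) ≤ 2 * S1 := by
    have : 2 * S1 = ∑ j ∈ Finset.Ico 1 i, (x j + x (i - j)) := by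
      rw [Finset.sum_add_distrib, ← hrev, ← hS1]; ring
    rw [this]
    calc 3 * (i - 1) = ∑ _j ∈ Finset.Ico 1 i, 3 := by
          rw [Finset.sum_const, Nat.card_Ico, smul_eq_mul]; ring
    _ ≤ ∑ j ∈ Finset.Ico 1 i, (x j + x (i - j)) := by
          apply Finset.sum_le_sum
          intro j hj
          simp only [Finset.mem_Ico] at hj
          exact hsup j hj.1 hj.2
  -- sum over the rest
  have hsplit : ∑ j ∈ Finset.Ico 1 m, x j = S1 + ∑ j ∈ Finset.Ico i m, x j := by
    rw [hS1, Finset.sum_Ico_consecutive]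
    · omega
    · omega
  have hrest : 3 + (m - i - 1) ≤ ∑ j ∈ Finset.Ico i m, x j := by
    rw [Finset.sum_eq_sum_Ico_succ_bot (by omega : i < m)]
    have h1 : m - i - 1 ≤ ∑ j ∈ Finset.Ico (i + 1) m, x j := by
      calc m - i - 1 = ∑ _j ∈ Finset.Ico (i + 1) m, 1 := by
            rw [Finset.sum_const, Nat.card_Ico, smul_eq_mul, mul_one]; omega
      _ ≤ _ := by
            apply Finset.sum_le_sum
            intro j hj
            simp only [Finset.mem_Ico] at hj
            exact hx1 j (by omega) (by omega)
    omega
  have hsum : S1 + 3 + (m - i - 1) ≤ g := by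
    have := hgF
    rw [hsplit] at this
    omega
  -- ceiling bounds
  set c : ℤ := ⌈((i : ℚ) - 1) / 2⌉ with hc
  have hc1 : 2 * c ≤ (i : ℤ) := by
    have h := Int.ceil_lt_add_one (((i : ℚ) - 1) / 2)
    rw [← hc] at h
    have : (2 * c : ℚ) < (i : ℚ) + 1 := by linarith
    have h2 : ((2 * c : ℤ) : ℚ) < (((i : ℤ) + 1 : ℤ) : ℚ) := by push_cast; linarith
    have h3 : (2 * c : ℤ) < (i : ℤ) + 1 := by exact_mod_cast h2
    omega
  have hc2 : (i : ℤ) - 1 ≤ 2 * c := by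
    have h := Int.le_ceil (((i : ℚ) - 1) / 2)
    rw [← hc] at h
    have h2 : (((i : ℤ) - 1 : ℤ) : ℚ) ≤ ((2 * c : ℤ) : ℚ) := by push_cast; linarith
    exact_mod_cast h2
  omega
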